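/- Let T₁ and T₂ be bounded operators on H having Toeplitz matrices with coefficient sequences b : ℤ → ℂ and c : ℤ → ℂ respectively. Then B∘(T₁∘T₂)∘S = T₁∘T₂ (i.e. the product T₁ T₂ is again a Toeplitz operator) if and only if b(k) = 0 for all k ≥ 1 or c(−k) = 0 for all k ≥ 1 (i.e. the first symbol is antiholomorphic or the second symbol is holomorphic). -/

import Mathlib

open scoped ComplexConjugate

local notation "⟪" x ", " y "⟫" => @inner ℂ _ _ x y

theorem statement11 {H : Type*} [NormedAddCommGroup H] [InnerProductSpace ℂ H]
    [CompleteSpace H]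
    (e : ℕ → H)
    (horth : ∀ m n : ℕ, 1 ≤ m → 1 ≤ n → ⟪e m, e n⟫ = if m = n then (m : ℂ) else 0)
    (hdense : Dense (Submodule.span ℂ (e '' {n : ℕ | 1 ≤ n}) : Set H))
    (S B : H →L[ℂ] H)
    (hS : ∀ n : ℕ, 1 ≤ n → S (e n) = e (n + 1))
    (hB1 : B (e 1) = 0)
    (hB : ∀ n : ℕ, 1 ≤ n → B (e (n + 1)) = e n)
    (T₁ T₂ : H →L[ℂ] H) (b c : ℤ → ℂ)
    (hT₁ : ∀ m n : ℕ, 1 ≤ m → 1 ≤ n → ⟪e m, T₁ (e n)⟫ = (m : ℂ) * b ((m : ℤ) - n))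
    (hT₂ : ∀ m n : ℕ, 1 ≤ m → 1 ≤ n → ⟪e m, T₂ (e n)⟫ = (m : ℂ) * c ((m : ℤ) - n)) :
    B ∘L ((T₁ ∘L T₂) ∘L S) = T₁ ∘L T₂ ↔
      (∀ k : ℕ, 1 ≤ k → b k = 0) ∨ (∀ k : ℕ, 1 ≤ k → c (-(k : ℤ)) = 0) := by
  classical
  -- the normalized orthonormal family
  set f : ℕ → H := fun k => ((Real.sqrt (k + 1) : ℂ))⁻¹ • e (k + 1) with hf
  have hsqpos : ∀ k : ℕ, (0:ℝ) < Real.sqrt (k + 1) := fun k =>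
    Real.sqrt_pos.mpr (by positivity)
  have hsqne : ∀ k : ℕ, ((Real.sqrt (k + 1) : ℂ)) ≠ 0 := fun k =>
    Complex.ofReal_ne_zero.mpr (ne_of_gt (hsqpos k))
  have hsq : ∀ k : ℕ, (Real.sqrt (k + 1) : ℂ) * (Real.sqrt (k + 1) : ℂ) = ((k : ℂ) + 1) := by
    intro k
    have h1 : Real.sqrt ((k:ℝ) + 1) * Real.sqrt ((k:ℝ) + 1) = ((k : ℝ) + 1) :=
      Real.mul_self_sqrt (by positivity)
    rw [← Complex.ofReal_mul, h1]; push_cast; ring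
  have horthf : Orthonormal ℂ f := by
    rw [orthonormal_iff_ite]
    intro i j
    simp only [hf, inner_smul_left, inner_smul_right]
    rw [horth (i + 1) (j + 1) (by omega) (by omega)]
    by_cases h : i = j
    · subst h
      simp only [if_pos rfl, if_pos rfl]
      rw [map_inv₀, Complex.conj_ofReal]
      have : ((i + 1 : ℕ) : ℂ) = (i : ℂ) + 1 := by push_cast; ring
      rw [this, ← hsq i]
      field_simp
      simp
    · rw [if_neg (by omega), if_neg h]
      simp
  have hspan : ⊤ ≤ (Submodule.span ℂ (Set.range f)).topologicalClosure := by
    have h1 : Submodule.span ℂ (e '' {n : ℕ | 1 ≤ n}) ≤ Submodule.span ℂ (Set.range f) := by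
      rw [Submodule.span_le]
      rintro x ⟨n, hn, rfl⟩
      have hn' : 1 ≤ n := hn
      obtain ⟨k, rfl⟩ : ∃ k, n = k + 1 := ⟨n - 1, by omega⟩
      have he : e (k + 1) = (Real.sqrt (k + 1) : ℂ) • f k := by
        simp only [hf, smul_smul, mul_inv_cancel₀ (hsqne k), one_smul]
      rw [he]
      exact Submodule.smul_mem _ _ (Submodule.subset_span ⟨k, rfl⟩)
    intro x _
    have hx : x ∈ closure (Submodule.span ℂ (e '' {n : ℕ | 1 ≤ n}) : Set H) := hdense x
    exact closure_mono h1 hx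
  let β : HilbertBasis ℕ ℂ H := HilbertBasis.mk horthf hspan
  have hβ : ∀ k, β k = f k := fun k => by
    rw [show (β : ℕ → H) = f from HilbertBasis.coe_mk _ _]
  -- matrix entries of the product
  set u : ℕ → ℕ → ℕ → ℂ := fun m n k => b ((m : ℤ) - k) * c ((k : ℤ) - n) with hu
  have hterm : ∀ m n : ℕ, 1 ≤ m → 1 ≤ n → ∀ k : ℕ,
      ⟪e m, T₁ (β k)⟫ * ⟪β k, T₂ (e n)⟫ = (m : ℂ) * u m n (k + 1) := by
    intro m n hm hn k
    rw [hβ k]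
    simp only [hf, map_smul, inner_smul_left, inner_smul_right, hu]
    rw [hT₁ m (k + 1) hm (by omega), hT₂ (k + 1) n (by omega) hn, map_inv₀,
      Complex.conj_ofReal]
    have h1 : ((k + 1 : ℕ) : ℂ) = (k : ℂ) + 1 := by push_cast; ring
    have h2 : ((Real.sqrt (k + 1) : ℂ))⁻¹ * ((Real.sqrt (k + 1) : ℂ))⁻¹ * ((k + 1 : ℕ) : ℂ)
        = 1 := by
      rw [h1, ← hsq k]
      field_simp
    linear_combination ((m : ℂ) * b ((m : ℤ) - ((k + 1 : ℕ) : ℤ)) *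
      c (((k + 1 : ℕ) : ℤ) - (n : ℤ))) * h2
  have hM : ∀ m n : ℕ, 1 ≤ m → 1 ≤ n →
      ⟪e m, (T₁ ∘L T₂) (e n)⟫ = (m : ℂ) * ∑' k : ℕ, u m n (k + 1) := by
    intro m n hm hn
    have h1 := β.tsum_inner_mul_inner (ContinuousLinearMap.adjoint T₁ (e m)) (T₂ (e n))
    have h2 : ∀ k : ℕ, ⟪ContinuousLinearMap.adjoint T₁ (e m), β k⟫ * ⟪β k, T₂ (e n)⟫
        = (m : ℂ) * u m n (k + 1) := fun k => by
      rw [ContinuousLinearMap.adjoint_inner_left]; exact hterm m n hm hn k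
    rw [ContinuousLinearMap.adjoint_inner_left] at h1
    simp only [ContinuousLinearMap.comp_apply]
    rw [← h1, tsum_congr h2, tsum_mul_left]
  have hsumm : ∀ m n : ℕ, 1 ≤ m → 1 ≤ n → Summable (u m n) := by
    intro m n hm hn
    have hmne : (m : ℂ) ≠ 0 := Nat.cast_ne_zero.mpr (by omega)
    have h1 := β.summable_inner_mul_inner (ContinuousLinearMap.adjoint T₁ (e m)) (T₂ (e n))
    have h2 : (fun k : ℕ => u m n (k + 1)) = fun k : ℕ =>
        ((m : ℂ))⁻¹ * (⟪ContinuousLinearMap.adjoint T₁ (e m), β k⟫ * ⟪β k, T₂ (e n)⟫) := by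
      funext k
      rw [ContinuousLinearMap.adjoint_inner_left, hterm m n hm hn k]
      field_simp
    have h3 : Summable (fun k : ℕ => u m n (k + 1)) := by rw [h2]; exact h1.mul_left _
    exact (summable_nat_add_iff 1).mp h3
  set d : ℕ → ℕ → ℂ := fun m n => ∑' k : ℕ, u m n (k + 1) with hd
  have hshift : ∀ m n : ℕ, 1 ≤ m → 1 ≤ n →
      d (m + 1) (n + 1) = b m * c (-(n : ℤ)) + d m n := by
    intro m n hm hn
    have h0 : d (m + 1) (n + 1) = ∑' k : ℕ, u m n k := by
      simp only [hd]
      apply tsum_congr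
      intro k
      simp only [hu]
      congr 2 <;> push_cast <;> ring
    rw [h0, Summable.tsum_eq_zero_add (hsumm m n hm hn)]
    congr 1
    simp only [hu]
    norm_num
  -- extension lemmas from the dense span
  have hextR : ∀ x y : H, (∀ n : ℕ, 1 ≤ n → ⟪x, e n⟫ = ⟪y, e n⟫) → x = y := by
    intro x y hxy
    apply hdense.eq_of_inner_left ℂ
    intro v hv
    induction hv using Submodule.span_induction with
    | mem z hz => obtain ⟨n, hn, rfl⟩ := hz; exact hxy n hn
    | zero => simp
    | add a b' _ _ iha ihb => simp only [inner_add_right, iha, ihb]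
    | smul r a _ iha => simp only [inner_smul_right, iha]
  have hextL : ∀ x y : H, (∀ m : ℕ, 1 ≤ m → ⟪e m, x⟫ = ⟪e m, y⟫) → x = y := by
    intro x y hxy
    apply hextR
    intro n hn
    have h := congrArg (starRingEnd ℂ) (hxy n hn)
    rwa [inner_conj_symm, inner_conj_symm] at h
  -- the adjoint of B on the e's
  have hBadj : ∀ m : ℕ, 1 ≤ m →
      ContinuousLinearMap.adjoint B (e m) = (((m : ℝ) / (m + 1) : ℝ) : ℂ) • e (m + 1) := by
    intro m hm
    apply hextR
    intro n hn
    rw [ContinuousLinearMap.adjoint_inner_left, inner_smul_left, Complex.conj_ofReal]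
    obtain ⟨k, rfl⟩ : ∃ k, n = k + 1 := ⟨n - 1, by omega⟩
    rw [horth (m + 1) (k + 1) (by omega) (by omega)]
    rcases Nat.eq_zero_or_pos k with hk | hk
    · subst hk
      rw [hB1, inner_zero_right, if_neg (by omega)]
      ring
    · rw [hB k hk, horth m k hm hk]
      by_cases hmk : m = k
      · subst hmk
        rw [if_pos rfl, if_pos rfl]
        have hne : ((m : ℂ) + 1) ≠ 0 := by
          have : ((m + 1 : ℕ) : ℂ) ≠ 0 := Nat.cast_ne_zero.mpr (by omega)
          push_cast at this; exact this
        push_cast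
        field_simp
      · rw [if_neg hmk, if_neg (by omega)]
        ring
  have hBw : ∀ m : ℕ, 1 ≤ m → ∀ w : H,
      ⟪e m, B w⟫ = (((m : ℝ) / (m + 1) : ℝ) : ℂ) * ⟪e (m + 1), w⟫ := by
    intro m hm w
    rw [← ContinuousLinearMap.adjoint_inner_left, hBadj m hm, inner_smul_left,
      Complex.conj_ofReal]
  have hL : ∀ m n : ℕ, 1 ≤ m → 1 ≤ n →
      ⟪e m, (B ∘L ((T₁ ∘L T₂) ∘L S)) (e n)⟫ = (m : ℂ) * d (m + 1) (n + 1) := by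
    intro m n hm hn
    have hMe := hM (m + 1) (n + 1) (by omega) (by omega)
    simp only [ContinuousLinearMap.comp_apply] at hMe ⊢
    rw [hS n hn, hBw m hm, hMe]
    have hne : ((m : ℂ) + 1) ≠ 0 := by
      have : ((m + 1 : ℕ) : ℂ) ≠ 0 := Nat.cast_ne_zero.mpr (by omega)
      push_cast at this; exact this
    push_cast
    field_simp
    ring
  constructor
  · intro hEq
    have hkey : ∀ m n : ℕ, 1 ≤ m → 1 ≤ n → b m * c (-(n : ℤ)) = 0 := by
      intro m n hm hn
      have hmne : (m : ℂ) ≠ 0 := Nat.cast_ne_zero.mpr (by omega)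
      have h1 : ⟪e m, (B ∘L ((T₁ ∘L T₂) ∘L S)) (e n)⟫ = ⟪e m, (T₁ ∘L T₂) (e n)⟫ := by
        rw [hEq]
      rw [hL m n hm hn, hM m n hm hn] at h1
      have h2 : d (m + 1) (n + 1) = d m n := mul_left_cancel₀ hmne h1
      have h3 := hshift m n hm hn
      linear_combination h2 - h3
    by_cases hb : ∀ k : ℕ, 1 ≤ k → b k = 0
    · exact Or.inl hb
    · right
      push_neg at hb
      obtain ⟨k₀, hk₀, hbk⟩ := hb
      intro n hn
      exact (mul_eq_zero.mp (hkey k₀ n hk₀ hn)).resolve_left hbk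
  · intro hOr
    have hzero : ∀ m n : ℕ, 1 ≤ m → 1 ≤ n → b m * c (-(n : ℤ)) = 0 := by
      intro m n hm hn
      rcases hOr with h | h
      · rw [h m hm]; ring
      · rw [h n hn]; ring
    apply ContinuousLinearMap.ext_on hdense
    intro x hx
    obtain ⟨n, hn, rfl⟩ := hx
    have hn' : 1 ≤ n := hn
    apply hextL
    intro m hm
    rw [hL m n hm hn', hM m n hm hn', hshift m n hm hn', hzero m n hm hn', zero_add]
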